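/- Let U ⊆ ℂ² be open, ρ : U → ℝ of class C² with ρ(z) > 0, Levi matrix H(ρ)(z) positive definite, and (∂ρ/∂z₁(z), ∂ρ/∂z₂(z)) ≠ (0,0) at a point z ∈ U. Let Z(z) be the complex gradient of ρ at z. Then Σ_μ Z^μ(z)·(∂²(log ρ)/∂z_μ∂z̄_ν)(z) = 0 for ν = 1,2 (i.e. Z(z) lies in the annihilator of the Levi form of log ρ at z) if and only if Z(ρ)(z) := Σ_μ Z^μ(z)·∂ρ/∂z_μ(z) = ρ(z). -/

import Mathlib

open Complex Matrix
open scoped ComplexOrder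

/-- The Wirtinger derivative `∂f/∂z_μ` of an `ℝ`-differentiable function `f : ℂⁿ → ℂ`. -/
noncomputable def wD {n : ℕ} (f : (Fin n → ℂ) → ℂ) (z : Fin n → ℂ) (μ : Fin n) : ℂ :=
  (1 / 2 : ℂ) *
    (fderiv ℝ f z (Pi.single μ 1) - Complex.I * fderiv ℝ f z (Pi.single μ Complex.I))

/-- The conjugate Wirtinger derivative `∂f/∂z̄_μ`. -/
noncomputable def wDbar {n : ℕ} (f : (Fin n → ℂ) → ℂ) (z : Fin n → ℂ) (μ : Fin n) : ℂ :=
  (1 / 2 : ℂ) *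
    (fderiv ℝ f z (Pi.single μ 1) + Complex.I * fderiv ℝ f z (Pi.single μ Complex.I))

/-- The Levi matrix `ρ_{μν̄} = ∂²ρ/∂z_μ∂z̄_ν` of a real-valued function `ρ : ℂⁿ → ℝ`. -/
noncomputable def levi {n : ℕ} (ρ : (Fin n → ℂ) → ℝ) (z : Fin n → ℂ) :
    Matrix (Fin n) (Fin n) ℂ :=
  Matrix.of fun μ ν => wD (fun w => wDbar (fun w' => (ρ w' : ℂ)) w ν) z μ

lemma wD_ofReal {n : ℕ} {h : (Fin n → ℂ) → ℝ} {h' : (Fin n → ℂ) →L[ℝ] ℝ} {w : Fin n → ℂ}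
    (hd : HasFDerivAt h h' w) (μ : Fin n) :
    wD (fun x => (h x : ℂ)) w μ =
      (1 / 2 : ℂ) * ((h' (Pi.single μ 1) : ℂ) - Complex.I * (h' (Pi.single μ Complex.I) : ℂ)) := by
  have hc : HasFDerivAt (fun x => (h x : ℂ)) (Complex.ofRealCLM.comp h') w :=
    Complex.ofRealCLM.hasFDerivAt.comp w hd
  simp [wD, hc.fderiv]

lemma wDbar_ofReal {n : ℕ} {h : (Fin n → ℂ) → ℝ} {h' : (Fin n → ℂ) →L[ℝ] ℝ} {w : Fin n → ℂ}
    (hd : HasFDerivAt h h' w) (μ : Fin n) :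
    wDbar (fun x => (h x : ℂ)) w μ =
      (1 / 2 : ℂ) * ((h' (Pi.single μ 1) : ℂ) + Complex.I * (h' (Pi.single μ Complex.I) : ℂ)) := by
  have hc : HasFDerivAt (fun x => (h x : ℂ)) (Complex.ofRealCLM.comp h') w :=
    Complex.ofRealCLM.hasFDerivAt.comp w hd
  simp [wDbar, hc.fderiv]

lemma wD_mul {n : ℕ} {f g : (Fin n → ℂ) → ℂ} {z : Fin n → ℂ}
    (hf : DifferentiableAt ℝ f z) (hg : DifferentiableAt ℝ g z) (μ : Fin n) :
    wD (fun w => f w * g w) z μ = wD f z μ * g z + f z * wD g z μ := by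
  simp only [wD, fderiv_fun_mul hf hg, ContinuousLinearMap.add_apply,
    ContinuousLinearMap.smul_apply, smul_eq_mul]
  ring

lemma wD_congr {n : ℕ} {f g : (Fin n → ℂ) → ℂ} {z : Fin n → ℂ}
    (h : f =ᶠ[nhds z] g) (μ : Fin n) : wD f z μ = wD g z μ := by
  simp [wD, h.fderiv_eq]

/-- At a point where `ρ > 0`, the Levi matrix of `ρ` is positive definite and `∂ρ ≠ 0`,
the complex gradient `Z` annihilates the Levi form of `log ρ` iff `Z(ρ) = ρ`. -/
theorem annihilator_iff_MongeAmpere (U : Set (Fin 2 → ℂ)) (hU : IsOpen U)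
    (ρ : (Fin 2 → ℂ) → ℝ) (hρ : ContDiffOn ℝ 2 ρ U)
    (z : Fin 2 → ℂ) (hz : z ∈ U) (hpos : 0 < ρ z)
    (hPD : (levi ρ z).PosDef)
    (hgrad : ¬ (wD (fun w => (ρ w : ℂ)) z 0 = 0 ∧ wD (fun w => (ρ w : ℂ)) z 1 = 0))
    (Z : Fin 2 → ℂ)
    (hZ : ∀ ν : Fin 2, ∑ μ : Fin 2, Z μ * levi ρ z μ ν = wDbar (fun w => (ρ w : ℂ)) z ν) :
    (∀ ν : Fin 2, ∑ μ : Fin 2, Z μ * levi (fun w => Real.log (ρ w)) z μ ν = 0) ↔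
      ∑ μ : Fin 2, Z μ * wD (fun w => (ρ w : ℂ)) z μ = (ρ z : ℂ) := by
  have hρdiff : ∀ w ∈ U, DifferentiableAt ℝ ρ w := fun w hw =>
    ((hρ.differentiableOn two_ne_zero).differentiableAt (hU.mem_nhds hw))
  have hDz : HasFDerivAt ρ (fderiv ℝ ρ z) z := (hρdiff z hz).hasFDerivAt
  have hρzC : (ρ z : ℂ) ≠ 0 := by exact_mod_cast hpos.ne'
  -- conjugate relation
  have hQP : ∀ ν : Fin 2, wDbar (fun w => (ρ w : ℂ)) z ν =
      starRingEnd ℂ (wD (fun w => (ρ w : ℂ)) z ν) := by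
    intro ν
    rw [wD_ofReal hDz ν, wDbar_ofReal hDz ν]
    simp only [_root_.map_mul, map_sub, map_add, map_div₀, _root_.map_one, map_ofNat,
      Complex.conj_ofReal, Complex.conj_I]
    ring
  -- differentiability of the first Wirtinger derivatives
  have hD1 : ContDiffOn ℝ 1 (fun w => fderiv ℝ ρ w) U :=
    hρ.fderiv_of_isOpen hU (by norm_num)
  have hDdiff : DifferentiableAt ℝ (fun w => fderiv ℝ ρ w) z :=
    (hD1.differentiableOn one_ne_zero).differentiableAt (hU.mem_nhds hz)
  have hAdiff : ∀ ν : Fin 2,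
      DifferentiableAt ℝ (fun w => wDbar (fun x => (ρ x : ℂ)) w ν) z := by
    intro ν
    have h1 : DifferentiableAt ℝ (fun w => fderiv ℝ ρ w (Pi.single ν 1)) z :=
      hDdiff.clm_apply (differentiableAt_const _)
    have h2 : DifferentiableAt ℝ (fun w => fderiv ℝ ρ w (Pi.single ν Complex.I)) z :=
      hDdiff.clm_apply (differentiableAt_const _)
    have h1' : DifferentiableAt ℝ (fun w => ((fderiv ℝ ρ w (Pi.single ν 1) : ℝ) : ℂ)) z :=
      Complex.ofRealCLM.differentiableAt.comp z h1
    have h2' : DifferentiableAt ℝ (fun w => ((fderiv ℝ ρ w (Pi.single ν Complex.I) : ℝ) : ℂ)) z :=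
      Complex.ofRealCLM.differentiableAt.comp z h2
    have hB : DifferentiableAt ℝ (fun w => (1 / 2 : ℂ) *
        (((fderiv ℝ ρ w (Pi.single ν 1) : ℝ) : ℂ) +
          Complex.I * ((fderiv ℝ ρ w (Pi.single ν Complex.I) : ℝ) : ℂ))) z :=
      (h1'.add (h2'.const_mul Complex.I)).const_mul _
    refine hB.congr_of_eventuallyEq ?_
    filter_upwards [hU.mem_nhds hz] with w hw
    exact wDbar_ofReal (hρdiff w hw).hasFDerivAt ν
  have hinvdiff : DifferentiableAt ℝ (fun w => (((ρ w)⁻¹ : ℝ) : ℂ)) z :=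
    Complex.ofRealCLM.differentiableAt.comp z ((hρdiff z hz).inv hpos.ne')
  have hinv' : HasFDerivAt (fun w => (ρ w)⁻¹)
      ((-(ρ z ^ 2)⁻¹) • fderiv ℝ ρ z) z :=
    (hasDerivAt_inv hpos.ne').comp_hasFDerivAt z hDz
  have hwDinv : ∀ μ : Fin 2, wD (fun w => (((ρ w)⁻¹ : ℝ) : ℂ)) z μ =
      (-((ρ z : ℂ) ^ 2)⁻¹) * wD (fun w => (ρ w : ℂ)) z μ := by
    intro μ
    rw [wD_ofReal hinv' μ, wD_ofReal hDz μ]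
    simp only [ContinuousLinearMap.smul_apply, smul_eq_mul]
    push_cast
    field_simp
    ring
  -- neighborhood where ρ > 0
  have hVopen : IsOpen (U ∩ ρ ⁻¹' Set.Ioi 0) :=
    hρ.continuousOn.isOpen_inter_preimage hU isOpen_Ioi
  have hzV : z ∈ U ∩ ρ ⁻¹' Set.Ioi 0 := ⟨hz, hpos⟩
  -- the key pointwise identity for the Levi matrix of log ρ
  have key : ∀ μ ν : Fin 2, levi (fun w => Real.log (ρ w)) z μ ν =
      (-((ρ z : ℂ) ^ 2)⁻¹) * wD (fun w => (ρ w : ℂ)) z μ * wDbar (fun w => (ρ w : ℂ)) z ν +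
        (((ρ z)⁻¹ : ℝ) : ℂ) * levi ρ z μ ν := by
    intro μ ν
    have hFG : (fun w => wDbar (fun x => ((Real.log (ρ x) : ℝ) : ℂ)) w ν) =ᶠ[nhds z]
        (fun w => (((ρ w)⁻¹ : ℝ) : ℂ) * wDbar (fun x => (ρ x : ℂ)) w ν) := by
      filter_upwards [hVopen.mem_nhds hzV] with w hw
      obtain ⟨hw1, hw2⟩ := hw
      have hw2' : (0 : ℝ) < ρ w := hw2
      have hlog : HasFDerivAt (fun x => Real.log (ρ x)) ((ρ w)⁻¹ • fderiv ℝ ρ w) w :=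
        (hρdiff w hw1).hasFDerivAt.log hw2'.ne'
      rw [wDbar_ofReal hlog ν, wDbar_ofReal (hρdiff w hw1).hasFDerivAt ν]
      simp only [ContinuousLinearMap.smul_apply, smul_eq_mul]
      push_cast
      ring
    have h1 : levi (fun w => Real.log (ρ w)) z μ ν =
        wD (fun w => (((ρ w)⁻¹ : ℝ) : ℂ) * wDbar (fun x => (ρ x : ℂ)) w ν) z μ :=
      wD_congr hFG μ
    rw [h1, wD_mul hinvdiff (hAdiff ν) μ, hwDinv μ]
    have h2 : wD (fun w => wDbar (fun x => (ρ x : ℂ)) w ν) z μ = levi ρ z μ ν := rfl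
    rw [h2]
  -- sum identity
  set S : ℂ := ∑ μ : Fin 2, Z μ * wD (fun w => (ρ w : ℂ)) z μ with hS
  have hsum : ∀ ν : Fin 2, ∑ μ : Fin 2, Z μ * levi (fun w => Real.log (ρ w)) z μ ν =
      wDbar (fun w => (ρ w : ℂ)) z ν * (((ρ z : ℂ) ^ 2)⁻¹) * ((ρ z : ℂ) - S) := by
    intro ν
    have hz' := hZ ν
    rw [Fin.sum_univ_two] at hz' ⊢
    rw [key 0 ν, key 1 ν, hS, Fin.sum_univ_two]
    have hinvcast : (((ρ z)⁻¹ : ℝ) : ℂ) = ((ρ z : ℂ))⁻¹ := by push_cast; ring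
    rw [hinvcast]
    field_simp
    linear_combination ((ρ z : ℂ)) * hz'
  constructor
  · intro h
    obtain hP : wD (fun w => (ρ w : ℂ)) z 0 ≠ 0 ∨ wD (fun w => (ρ w : ℂ)) z 1 ≠ 0 := by
      by_contra hc
      push_neg at hc
      exact hgrad ⟨hc.1, not_not.mp (by intro hne; exact hne (hc.2))⟩
    obtain ⟨ν, hν⟩ : ∃ ν : Fin 2, wD (fun w => (ρ w : ℂ)) z ν ≠ 0 := by
      rcases hP with h0 | h1
      · exact ⟨0, h0⟩
      · exact ⟨1, h1⟩
    have hQν : wDbar (fun w => (ρ w : ℂ)) z ν ≠ 0 := by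
      rw [hQP ν]
      simpa using hν
    have := h ν
    rw [hsum ν] at this
    have h2 : ((ρ z : ℂ) ^ 2)⁻¹ ≠ 0 := inv_ne_zero (pow_ne_zero _ hρzC)
    rcases mul_eq_zero.mp this with h3 | h4
    · rcases mul_eq_zero.mp h3 with h5 | h6
      · exact absurd h5 hQν
      · exact absurd h6 h2
    · exact (sub_eq_zero.mp h4).symm
  · intro h ν
    rw [hsum ν, h]
    simp
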